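/- Let d be a positive integer, μ a measure on ℝ^d, t ∈ ℝ, and u : ℝ × ℝ^d → ℝ differentiable at (t,x) for every x. Let η(s) = s²/2 (so the entropy variable is v(s) = s) and let f₁,…,f_d, q₁,…,q_d : ℝ → ℝ be differentiable with q_k′(s) = s·f_k′(s) for all s. Define R(x) := ∂_t u(t,x) + Σ_k ∂_{x_k}(f_k∘u)(t,x) and E(x) := ∂_t(η∘u)(t,x) + Σ_k ∂_{x_k}(q_k∘u)(t,x), and assume E and u(t,·)·R are μ-integrable. Let V be a set of functions ℝ^d → ℝ with ∫ w R dμ = 0 for all w ∈ V (with w·R μ-integrable), and suppose the function x ↦ u(t,x) belongs to V. Then ∫ E dμ = 0. -/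

import Mathlib

open MeasureTheory

/-- Corollary to Theorem 1: the standard continuous Galerkin method is entropy
conservative for the square entropy `η(u) = u²/2` (entropy variable `v(u) = u`),
because `u(t,·)` lies in the test space, so the entropy production vanishes. -/
theorem entropy_conservation_CG_square_entropy
    (d : ℕ) (hd : 0 < d) (μ : Measure (Fin d → ℝ)) (t : ℝ)
    (u : ℝ × (Fin d → ℝ) → ℝ)
    (hu : ∀ x : Fin d → ℝ, DifferentiableAt ℝ u (t, x))
    (η : ℝ → ℝ) (hη : ∀ s, η s = s ^ 2 / 2)
    (f q : Fin d → ℝ → ℝ)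
    (hf : ∀ k, Differentiable ℝ (f k))
    (hq : ∀ k, Differentiable ℝ (q k))
    (hqf : ∀ k s, deriv (q k) s = s * deriv (f k) s)
    (R E : (Fin d → ℝ) → ℝ)
    (hR : ∀ x, R x = deriv (fun s => u (s, x)) t +
      ∑ k, deriv (fun s => f k (u (t, Function.update x k s))) (x k))
    (hE : ∀ x, E x = deriv (fun s => η (u (s, x))) t +
      ∑ k, deriv (fun s => q k (u (t, Function.update x k s))) (x k))
    (hEint : Integrable E μ)
    (huRint : Integrable (fun x => u (t, x) * R x) μ)
    (V : Set ((Fin d → ℝ) → ℝ))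
    (hVint : ∀ w ∈ V, Integrable (fun x => w x * R x) μ)
    (hGal : ∀ w ∈ V, ∫ x, w x * R x ∂μ = 0)
    (hmem : (fun x => u (t, x)) ∈ V) :
    ∫ x, E x ∂μ = 0 := by
  have key : ∀ x, E x = u (t, x) * R x := by
    intro x
    -- differentiability of s ↦ u (s, x)
    have hw : DifferentiableAt ℝ (fun s => u (s, x)) t := by
      have : (fun s => u (s, x)) = u ∘ (fun s => (s, x)) := rfl
      rw [this]
      exact (hu x).comp t (differentiableAt_id.prodMk (differentiableAt_const _))
    -- differentiability of s ↦ u (t, update x k s)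
    have hg : ∀ k, DifferentiableAt ℝ
        (fun s => u (t, Function.update x k s)) (x k) := by
      intro k
      have hupd : DifferentiableAt ℝ (fun s : ℝ => Function.update x k s) (x k) := by
        apply differentiableAt_pi.mpr
        intro j
        by_cases h : j = k
        · subst h; simp only [Function.update_self]; exact differentiableAt_id
        · simp only [Function.update_of_ne h]; exact differentiableAt_const _
      have : (fun s => u (t, Function.update x k s)) =
          u ∘ (fun s => (t, Function.update x k s)) := rfl
      rw [this]
      have hx : Function.update x k (x k) = x := Function.update_eq_self k x
      have hux : DifferentiableAt ℝ u (t, Function.update x k (x k)) := by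
        rw [hx]; exact hu x
      exact hux.comp (x k) ((differentiableAt_const t).prodMk hupd)
    -- time term
    have htime : deriv (fun s => η (u (s, x))) t =
        u (t, x) * deriv (fun s => u (s, x)) t := by
      have h1 : (fun s => η (u (s, x))) = fun s => (u (s, x)) ^ 2 / 2 := by
        funext s; rw [hη]
      rw [h1]
      have := ((hw.hasDerivAt.pow 2).div_const 2).deriv
      simp only [Pi.pow_apply] at this
      rw [this]; push_cast; ring
    -- space terms
    have hspace : ∀ k, deriv (fun s => q k (u (t, Function.update x k s))) (x k) =
        u (t, x) * deriv (fun s => f k (u (t, Function.update x k s))) (x k) := by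
      intro k
      have hx : Function.update x k (x k) = x := Function.update_eq_self k x
      have hqc : deriv (fun s => q k (u (t, Function.update x k s))) (x k) =
          deriv (q k) (u (t, x)) *
            deriv (fun s => u (t, Function.update x k s)) (x k) := by
        have := deriv_comp (x := x k) ((hq k).differentiableAt) (hg k)
        simpa [Function.comp_def, hx] using this
      have hfc : deriv (fun s => f k (u (t, Function.update x k s))) (x k) =
          deriv (f k) (u (t, x)) *
            deriv (fun s => u (t, Function.update x k s)) (x k) := by
        have := deriv_comp (x := x k) ((hf k).differentiableAt) (hg k)
        simpa [Function.comp_def, hx] using this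
      rw [hqc, hfc, hqf]; ring
    rw [hE, hR, htime, mul_add, Finset.mul_sum]
    congr 1
    exact Finset.sum_congr rfl fun k _ => hspace k
  calc ∫ x, E x ∂μ = ∫ x, u (t, x) * R x ∂μ := by
        exact integral_congr_ae (Filter.Eventually.of_forall key)
    _ = 0 := hGal _ hmem
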